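/- Let n ≥ 1 and 0 ≤ k ≤ n be integers, and let A(x) = (1+x)·log(1+x) + (1−x)·log(1−x). Then Σ_{m=0}^{n} [2m−n ≥ k]·C(n,m) ≤ 2^n·exp(−(n/2)·A(k/n)), where C(n,m) is the binomial coefficient and the bracket selects those m with 2m−n ≥ k. Equivalently, the simple random walk S_n on ℤ (sum of n independent uniform ±1 steps) satisfies P(S_n ≥ k) ≤ exp(−(n/2)·A(k/n)). -/

import Mathlib

open Real Finset

/-- **Chernov bound.** For `1 ≤ n` and `k ≤ n`,
`P(Sₙ ≥ k) ≤ exp(-(n/2) A(k/n))` for the simple random walk on `ℤ`, where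
`A(x) = (1+x) log (1+x) + (1-x) log (1-x)`. -/
theorem simple_random_walk_chernov_bound (n k : ℕ) (hn : 1 ≤ n) (hk : k ≤ n) :
    (∑ m ∈ Finset.range (n + 1),
        if (k : ℤ) ≤ 2 * (m : ℤ) - (n : ℤ) then ((n.choose m : ℕ) : ℝ) else 0) ≤
      2 ^ n * Real.exp (-((n : ℝ) / 2) *
        ((1 + (k : ℝ) / n) * Real.log (1 + (k : ℝ) / n) +
          (1 - (k : ℝ) / n) * Real.log (1 - (k : ℝ) / n))) := by
  have hn0 : (0:ℝ) < n := by exact_mod_cast hn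
  rcases eq_or_lt_of_le hk with rfl | hkn
  · -- case k = n : both sides equal 1
    have hL : (∑ m ∈ Finset.range (k + 1),
        if (k : ℤ) ≤ 2 * (m : ℤ) - (k : ℤ) then ((k.choose m : ℕ) : ℝ) else 0) = 1 := by
      have hcg : ∀ m ∈ Finset.range (k + 1),
          (if (k : ℤ) ≤ 2 * (m : ℤ) - (k : ℤ) then ((k.choose m : ℕ) : ℝ) else 0)
          = if m = k then (1:ℝ) else 0 := by
        intro m hm
        simp only [Finset.mem_range] at hm
        by_cases h : m = k
        · subst h; rw [if_pos (by omega), if_pos rfl]; simp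
        · have h1 : ¬ ((k : ℤ) ≤ 2 * (m : ℤ) - (k : ℤ)) := by omega
          simp [h, h1]
      rw [Finset.sum_congr rfl hcg]
      simp
    rw [hL]
    have hx : (k : ℝ) / k = 1 := div_self (ne_of_gt hn0)
    rw [hx]
    have h11 : (1:ℝ) - 1 = 0 := by norm_num
    rw [h11, Real.log_zero]
    have : -((k : ℝ) / 2) * ((1 + 1) * Real.log (1 + 1) + 0 * 0)
        = -((k:ℝ) * Real.log 2) := by norm_num; ring_nf
    rw [this]
    have h2 : Real.exp (-((k:ℝ) * Real.log 2)) = ((2:ℝ)^k)⁻¹ := by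
      rw [Real.exp_neg, Real.exp_nat_mul, Real.exp_log (by norm_num)]
    rw [h2]
    rw [mul_inv_cancel₀ (by positivity)]
  · -- case k < n
    set x : ℝ := (k : ℝ) / n with hxdef
    have hx0 : 0 ≤ x := by positivity
    have hx1 : x < 1 := (div_lt_one hn0).mpr (by exact_mod_cast hkn)
    have h1p : (0:ℝ) < 1 + x := by linarith
    have h1m : (0:ℝ) < 1 - x := by linarith
    set L1 : ℝ := Real.log (1 + x) with hL1
    set L2 : ℝ := Real.log (1 - x) with hL2
    set t : ℝ := (L1 - L2) / 2 with htdef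
    have hLle : L2 ≤ L1 := Real.log_le_log h1m (by linarith)
    have ht : 0 ≤ t := by simp only [htdef]; linarith
    have he1 : Real.exp L1 = 1 + x := Real.exp_log h1p
    have he2 : Real.exp L2 = 1 - x := Real.exp_log h1m
    have hkx : (k : ℝ) = n * x := by rw [hxdef]; field_simp [ne_of_gt hn0]
    -- Step A: pointwise bound
    have stepA : (∑ m ∈ Finset.range (n + 1),
        if (k : ℤ) ≤ 2 * (m : ℤ) - (n : ℤ) then ((n.choose m : ℕ) : ℝ) else 0)
        ≤ ∑ m ∈ Finset.range (n + 1),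
          (n.choose m : ℝ) * Real.exp (t * (2 * m - n - k)) := by
      apply Finset.sum_le_sum
      intro m hm
      by_cases h : (k : ℤ) ≤ 2 * (m : ℤ) - (n : ℤ)
      · simp only [h, if_true]
        nth_rewrite 1 [← mul_one ((n.choose m : ℝ))]
        apply mul_le_mul_of_nonneg_left _ (by positivity)
        rw [← Real.exp_zero]
        apply Real.exp_le_exp.mpr
        have harg : (0:ℝ) ≤ 2 * m - n - k := by
          have : (k:ℝ) ≤ 2 * m - n := by exact_mod_cast h
          linarith
        positivity
      · simp only [h, if_false]
        positivity
    -- Step B: binomial theorem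
    have stepB : (∑ m ∈ Finset.range (n + 1),
          (n.choose m : ℝ) * Real.exp (t * (2 * m - n - k)))
        = Real.exp (-(t * k)) * (Real.exp t + Real.exp (-t)) ^ n := by
      rw [add_pow, Finset.mul_sum]
      apply Finset.sum_congr rfl
      intro m hm
      simp only [Finset.mem_range] at hm
      have hmn : m ≤ n := Nat.lt_succ_iff.mp hm
      have hterm : Real.exp (t * (2 * m - n - k))
          = Real.exp t ^ m * Real.exp (-t) ^ (n - m) * Real.exp (-(t * k)) := by
        rw [← Real.exp_nat_mul, ← Real.exp_nat_mul, ← Real.exp_add, ← Real.exp_add]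
        congr 1
        push_cast [Nat.cast_sub hmn]
        ring
      rw [hterm]
      ring
    -- Step C: the exponential identity
    have hsum : Real.exp t + Real.exp (-t) = 2 * Real.exp (-((L1 + L2) / 2)) := by
      have e1 : Real.exp t = Real.exp L1 * Real.exp (-((L1 + L2) / 2)) := by
        rw [← Real.exp_add]; congr 1; simp only [htdef]; ring
      have e2 : Real.exp (-t) = Real.exp L2 * Real.exp (-((L1 + L2) / 2)) := by
        rw [← Real.exp_add]; congr 1; simp only [htdef]; ring
      rw [e1, e2, he1, he2]; ring
    have stepC : Real.exp (-(t * k)) * (Real.exp t + Real.exp (-t)) ^ n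
        = 2 ^ n * Real.exp (-((n : ℝ) / 2) * ((1 + x) * L1 + (1 - x) * L2)) := by
      rw [hsum, mul_pow, ← Real.exp_nat_mul, ← mul_assoc,
        mul_comm (Real.exp (-(t * k))) ((2:ℝ) ^ n), mul_assoc, ← Real.exp_add]
      congr 1
      rw [hkx, htdef]
      ring
    calc (∑ m ∈ Finset.range (n + 1),
        if (k : ℤ) ≤ 2 * (m : ℤ) - (n : ℤ) then ((n.choose m : ℕ) : ℝ) else 0)
        ≤ ∑ m ∈ Finset.range (n + 1),
          (n.choose m : ℝ) * Real.exp (t * (2 * m - n - k)) := stepA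
      _ = Real.exp (-(t * k)) * (Real.exp t + Real.exp (-t)) ^ n := stepB
      _ = 2 ^ n * Real.exp (-((n : ℝ) / 2) * ((1 + x) * L1 + (1 - x) * L2)) := stepC
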